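/- Let d ≥ 1 and let Ψ : [0, ∞) → ℝ satisfy Ψ = M − N where M and N are bounded nondecreasing functions with ∫_0^∞ r^{d−1} |M(r)| dr < ∞ and ∫_0^∞ r^{d−1} |N(r)| dr < ∞. Define K : ℝ^d → ℝ by K(x) = Ψ(|x|). Then there is a constant B_1 > 0 such that for every 0 < ε ≤ 1 there exist finitely many values λ_1, …, λ_N ∈ [1, ∞) with N ≤ B_1/ε such that for every λ ≥ 1 there is some j with ∫_{ℝ^d} |K(λ^{1/d} x) − K(λ_j^{1/d} x)| dx < ε; that is, the class {x ↦ K(λ^{1/d} x) : λ ≥ 1} has L_1(ℝ^d)-covering numbers N(ε) ≤ B_1 ε^{−1} for 0 < ε ≤ 1. -/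

import Mathlib

open MeasureTheory Set
open scoped ENNReal

section aux
variable {E : Type*} [NormedAddCommGroup E] [NormedSpace ℝ E]
    [MeasurableSpace E] [BorelSpace E] [FiniteDimensional ℝ E] [Nontrivial E]
    (μ : Measure E) [μ.IsAddHaarMeasure]

lemma aux_lintegral_norm (f : ℝ → ℝ≥0∞) (hf : Measurable f) :
    ∫⁻ x, f ‖x‖ ∂μ = μ.toSphere univ *
      ∫⁻ r in Ioi (0:ℝ), ENNReal.ofReal (r ^ (Module.finrank ℝ E - 1)) * f r := by
  calc ∫⁻ x, f ‖x‖ ∂μ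
      = ∫⁻ x : ({0}ᶜ : Set E), f ‖(x : E)‖ ∂(μ.comap (↑)) :=
        ((lintegral_subtype_comap (measurableSet_singleton (0:E)).compl fun x => f ‖x‖).trans
          (by rw [MeasureTheory.restrict_compl_singleton])).symm
    _ = ∫⁻ p : Metric.sphere (0:E) 1 × Ioi (0:ℝ), f p.2
          ∂(μ.toSphere.prod (Measure.volumeIoiPow (Module.finrank ℝ E - 1))) := by
        rw [← (μ.measurePreserving_homeomorphUnitSphereProd).lintegral_comp
          (f := fun p : Metric.sphere (0:E) 1 × Ioi (0:ℝ) => f p.2) (by fun_prop)]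
        exact lintegral_congr fun x => by rw [homeomorphUnitSphereProd_apply_snd_coe]
    _ = μ.toSphere univ *
          ∫⁻ r : Ioi (0:ℝ), f r ∂(Measure.volumeIoiPow (Module.finrank ℝ E - 1)) := by
        rw [lintegral_prod (fun p : Metric.sphere (0:E) 1 × Ioi (0:ℝ) => f p.2) (by fun_prop)]
        simp [lintegral_const, mul_comm]
    _ = _ := by
        congr 1
        rw [Measure.volumeIoiPow,
          lintegral_withDensity_eq_lintegral_mul _
            (f := fun r : Ioi (0:ℝ) => ENNReal.ofReal (r.1 ^ (Module.finrank ℝ E - 1)))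
            (by fun_prop) (g := fun r : Ioi (0:ℝ) => f r.1) (by fun_prop)]
        rw [← lintegral_subtype_comap measurableSet_Ioi
          (fun r : ℝ => ENNReal.ofReal (r ^ (Module.finrank ℝ E - 1)) * f r)]
        rfl

lemma aux_integrable_norm (f : ℝ → ℝ) (hf : Measurable f)
    (hint : IntegrableOn (fun r : ℝ => r ^ (Module.finrank ℝ E - 1) * |f r|) (Ioi 0)) :
    Integrable (fun x : E => f ‖x‖) μ := by
  refine ⟨(hf.comp measurable_norm).aestronglyMeasurable, ?_⟩
  rw [HasFiniteIntegral]
  rw [aux_lintegral_norm μ (fun r => ‖f r‖ₑ) hf.enorm]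
  have h1 : ∫⁻ r in Ioi (0:ℝ), ENNReal.ofReal (r ^ (Module.finrank ℝ E - 1)) * ‖f r‖ₑ
      = ∫⁻ r in Ioi (0:ℝ), ‖r ^ (Module.finrank ℝ E - 1) * |f r|‖ₑ := by
    refine setLIntegral_congr_fun measurableSet_Ioi (fun r hr => ?_)
    rw [enorm_mul, Real.enorm_eq_ofReal (pow_nonneg (le_of_lt hr) _),
      Real.enorm_abs]
  rw [h1]
  exact ENNReal.mul_lt_top (measure_lt_top _ _) hint.2

omit [Nontrivial E] in
lemma aux_dist (g : E → ℝ) (hg : Integrable g μ) {a b : ℝ} (ha : 0 < a) (hab : a ≤ b)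
    (hmono : ∀ x : E, g (a • x) ≤ g (b • x)) :
    ∫ x, |g (b • x) - g (a • x)| ∂μ =
      ((b ^ Module.finrank ℝ E)⁻¹ - (a ^ Module.finrank ℝ E)⁻¹) * ∫ x, g x ∂μ := by
  have hb : 0 < b := ha.trans_le hab
  have h1 : ∀ x : E, |g (b • x) - g (a • x)| = g (b • x) - g (a • x) := fun x =>
    abs_of_nonneg (sub_nonneg.2 (hmono x))
  simp_rw [h1]
  rw [integral_sub (hg.comp_smul hb.ne') (hg.comp_smul ha.ne'),
    Measure.integral_comp_smul_of_nonneg μ g b (hR := hb.le),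
    Measure.integral_comp_smul_of_nonneg μ g a (hR := ha.le), smul_eq_mul, smul_eq_mul]
  ring

lemma aux_arith {u v x y : ℝ} (h : 0 ≤ u - v) :
    (v - u) * x + (v - u) * y ≤ (u - v) * (|x| + |y| + 1) := by
  have h1 : (0:ℝ) ≤ (u - v) * (|x| + x) :=
    mul_nonneg h (by linarith [neg_abs_le x])
  have h2 : (0:ℝ) ≤ (u - v) * (|y| + y) :=
    mul_nonneg h (by linarith [neg_abs_le y])
  nlinarith

end aux

set_option maxHeartbeats 2000000 in
theorem stmt12 (d : ℕ) (hd : 1 ≤ d) (M N : ℝ → ℝ)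
    (hMmono : MonotoneOn M (Set.Ici 0)) (hNmono : MonotoneOn N (Set.Ici 0))
    (hMbd : ∃ c : ℝ, ∀ r ∈ Set.Ici (0 : ℝ), |M r| ≤ c)
    (hNbd : ∃ c : ℝ, ∀ r ∈ Set.Ici (0 : ℝ), |N r| ≤ c)
    (hMint : IntegrableOn (fun r : ℝ => r ^ (d - 1) * |M r|) (Set.Ioi 0))
    (hNint : IntegrableOn (fun r : ℝ => r ^ (d - 1) * |N r|) (Set.Ioi 0))
    (K : EuclideanSpace ℝ (Fin d) → ℝ) (hK : ∀ x, K x = M ‖x‖ - N ‖x‖) :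
    ∃ B1 : ℝ, 0 < B1 ∧ ∀ ε : ℝ, 0 < ε → ε ≤ 1 →
      ∃ T : Finset ℝ, (∀ l ∈ T, (1 : ℝ) ≤ l) ∧ (T.card : ℝ) ≤ B1 / ε ∧
        ∀ l : ℝ, 1 ≤ l → ∃ l' ∈ T,
          ∫ x : EuclideanSpace ℝ (Fin d),
            |K (l ^ ((1 : ℝ) / d) • x) - K (l' ^ ((1 : ℝ) / d) • x)| < ε := by
  classical
  haveI : Nonempty (Fin d) := ⟨⟨0, hd⟩⟩
  haveI : Nontrivial (EuclideanSpace ℝ (Fin d)) :=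
    Module.nontrivial_of_finrank_pos (R := ℝ) (by rw [finrank_euclideanSpace_fin]; omega)
  have hdim : Module.finrank ℝ (EuclideanSpace ℝ (Fin d)) = d := finrank_euclideanSpace_fin
  set M' : ℝ → ℝ := fun r => M (max r 0) with hM'
  set N' : ℝ → ℝ := fun r => N (max r 0) with hN'
  have hM'mono : Monotone M' := fun r s hrs =>
    hMmono (Set.mem_Ici.2 (le_max_right r 0)) (Set.mem_Ici.2 (le_max_right s 0))
      (max_le_max hrs le_rfl)
  have hN'mono : Monotone N' := fun r s hrs =>
    hNmono (Set.mem_Ici.2 (le_max_right r 0)) (Set.mem_Ici.2 (le_max_right s 0))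
      (max_le_max hrs le_rfl)
  have hM'int : IntegrableOn
      (fun r : ℝ => r ^ (Module.finrank ℝ (EuclideanSpace ℝ (Fin d)) - 1) * |M' r|) (Ioi 0) := by
    rw [hdim]
    exact hMint.congr_fun (fun r hr => by simp [hM', max_eq_left (le_of_lt (Set.mem_Ioi.1 hr))])
      measurableSet_Ioi
  have hN'int : IntegrableOn
      (fun r : ℝ => r ^ (Module.finrank ℝ (EuclideanSpace ℝ (Fin d)) - 1) * |N' r|) (Ioi 0) := by
    rw [hdim]
    exact hNint.congr_fun (fun r hr => by simp [hN', max_eq_left (le_of_lt (Set.mem_Ioi.1 hr))])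
      measurableSet_Ioi
  set gM : EuclideanSpace ℝ (Fin d) → ℝ := fun x => M' ‖x‖ with hgMdef
  set gN : EuclideanSpace ℝ (Fin d) → ℝ := fun x => N' ‖x‖ with hgNdef
  have hgM : Integrable gM := aux_integrable_norm volume M' hM'mono.measurable hM'int
  have hgN : Integrable gN := aux_integrable_norm volume N' hN'mono.measurable hN'int
  have hKg : ∀ y : EuclideanSpace ℝ (Fin d), K y = gM y - gN y := fun y => by
    rw [hK y, hgMdef, hgNdef, hM', hN']
    simp [max_eq_left (norm_nonneg y)]
  obtain ⟨IM, hIMdef⟩ : ∃ I : ℝ, (∫ x, gM x) = I := ⟨_, rfl⟩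
  obtain ⟨IN, hINdef⟩ : ∃ I : ℝ, (∫ x, gN x) = I := ⟨_, rfl⟩
  set C : ℝ := |IM| + |IN| + 1 with hC
  have hC1 : 1 ≤ C := by
    have := abs_nonneg IM; have := abs_nonneg IN; simp only [hC]; linarith
  have hC0 : 0 < C := lt_of_lt_of_le one_pos hC1
  -- the key Lipschitz estimate
  have key : ∀ l l' : ℝ, 1 ≤ l → 1 ≤ l' → l ≤ l' →
      ∫ x : EuclideanSpace ℝ (Fin d),
        |K (l ^ ((1 : ℝ) / d) • x) - K (l' ^ ((1 : ℝ) / d) • x)| ≤ (l⁻¹ - l'⁻¹) * C := by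
    intro l l' hl hl' hll'
    have hl0 : (0:ℝ) < l := lt_of_lt_of_le one_pos hl
    have hl'0 : (0:ℝ) < l' := lt_of_lt_of_le one_pos hl'
    set a : ℝ := l ^ ((1 : ℝ) / d) with hadef
    set b : ℝ := l' ^ ((1 : ℝ) / d) with hbdef
    have ha : 0 < a := Real.rpow_pos_of_pos hl0 _
    have hb : 0 < b := Real.rpow_pos_of_pos hl'0 _
    have hab : a ≤ b := Real.rpow_le_rpow hl0.le hll' (by positivity)
    have hdne : (d:ℝ) ≠ 0 := by positivity
    have hapow : a ^ Module.finrank ℝ (EuclideanSpace ℝ (Fin d)) = l := by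
      rw [hdim, hadef, ← Real.rpow_natCast (l ^ ((1:ℝ)/d)) d, ← Real.rpow_mul hl0.le]
      rw [one_div, inv_mul_cancel₀ hdne, Real.rpow_one]
    have hbpow : b ^ Module.finrank ℝ (EuclideanSpace ℝ (Fin d)) = l' := by
      rw [hdim, hbdef, ← Real.rpow_natCast (l' ^ ((1:ℝ)/d)) d, ← Real.rpow_mul hl'0.le]
      rw [one_div, inv_mul_cancel₀ hdne, Real.rpow_one]
    have hnorm : ∀ x : EuclideanSpace ℝ (Fin d), ‖a • x‖ ≤ ‖b • x‖ := by
      intro x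
      rw [norm_smul, norm_smul]
      refine mul_le_mul_of_nonneg_right ?_ (norm_nonneg x)
      rw [Real.norm_eq_abs, Real.norm_eq_abs, abs_of_pos ha, abs_of_pos hb]
      exact hab
    have hmonoM : ∀ x : EuclideanSpace ℝ (Fin d), gM (a • x) ≤ gM (b • x) := fun x =>
      hM'mono (hnorm x)
    have hmonoN : ∀ x : EuclideanSpace ℝ (Fin d), gN (a • x) ≤ gN (b • x) := fun x =>
      hN'mono (hnorm x)
    have distM := aux_dist volume gM hgM ha hab hmonoM
    have distN := aux_dist volume gN hgN ha hab hmonoN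
    rw [hapow, hbpow, hIMdef] at distM
    rw [hapow, hbpow, hINdef] at distN
    have hInt1 : Integrable (fun x : EuclideanSpace ℝ (Fin d) => |gM (b • x) - gM (a • x)|) :=
      ((hgM.comp_smul hb.ne').sub (hgM.comp_smul ha.ne')).abs
    have hInt2 : Integrable (fun x : EuclideanSpace ℝ (Fin d) => |gN (b • x) - gN (a • x)|) :=
      ((hgN.comp_smul hb.ne').sub (hgN.comp_smul ha.ne')).abs
    have hpt : ∀ x : EuclideanSpace ℝ (Fin d), |K (a • x) - K (b • x)| ≤
        |gM (b • x) - gM (a • x)| + |gN (b • x) - gN (a • x)| := by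
      intro x
      rw [hKg, hKg, abs_sub_comm]
      have h2 : (gM (b•x) - gN (b•x)) - (gM (a•x) - gN (a•x))
          = (gM (b•x) - gM (a•x)) - (gN (b•x) - gN (a•x)) := by ring
      rw [h2]
      exact abs_sub _ _
    have step1 : ∫ x : EuclideanSpace ℝ (Fin d), |K (a • x) - K (b • x)| ≤
        ∫ x : EuclideanSpace ℝ (Fin d),
          (|gM (b • x) - gM (a • x)| + |gN (b • x) - gN (a • x)|) :=
      integral_mono_of_nonneg (ae_of_all _ fun x => abs_nonneg _) (hInt1.add hInt2)
        (ae_of_all _ hpt)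
    rw [integral_add hInt1 hInt2, distM, distN] at step1
    refine step1.trans ?_
    have ht0 : 0 ≤ l⁻¹ - l'⁻¹ := by
      have : l'⁻¹ ≤ l⁻¹ := by
        rw [inv_le_inv₀ hl'0 hl0]; exact hll'
      linarith
    rw [hC]
    exact aux_arith ht0
  -- symmetric version
  have key2 : ∀ l l' : ℝ, 1 ≤ l → 1 ≤ l' →
      ∫ x : EuclideanSpace ℝ (Fin d),
        |K (l ^ ((1 : ℝ) / d) • x) - K (l' ^ ((1 : ℝ) / d) • x)| ≤ |l⁻¹ - l'⁻¹| * C := by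
    intro l l' hl hl'
    rcases le_total l l' with h | h
    · have ht0 : 0 ≤ l⁻¹ - l'⁻¹ := by
        have : l'⁻¹ ≤ l⁻¹ := by
          rw [inv_le_inv₀ (lt_of_lt_of_le one_pos hl') (lt_of_lt_of_le one_pos hl)]; exact h
        linarith
      rw [abs_of_nonneg ht0]
      exact key l l' hl hl' h
    · have ht0 : 0 ≤ l'⁻¹ - l⁻¹ := by
        have : l⁻¹ ≤ l'⁻¹ := by
          rw [inv_le_inv₀ (lt_of_lt_of_le one_pos hl) (lt_of_lt_of_le one_pos hl')]; exact h
        linarith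
      rw [abs_sub_comm, abs_of_nonneg ht0]
      calc ∫ x : EuclideanSpace ℝ (Fin d),
              |K (l ^ ((1 : ℝ) / d) • x) - K (l' ^ ((1 : ℝ) / d) • x)|
          = ∫ x : EuclideanSpace ℝ (Fin d),
              |K (l' ^ ((1 : ℝ) / d) • x) - K (l ^ ((1 : ℝ) / d) • x)| := by
            simp_rw [abs_sub_comm]
        _ ≤ (l'⁻¹ - l⁻¹) * C := key l' l hl' hl h
  -- covering construction
  refine ⟨2 * C, by positivity, fun ε hε hε1 => ?_⟩
  set δ : ℝ := ε / (2 * C) with hδdef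
  have hδ : 0 < δ := by positivity
  have hδC : δ * C = ε / 2 := by
    rw [hδdef]; field_simp
  have hδ1 : δ ≤ 1 := by
    rw [hδdef, div_le_one (by positivity)]
    nlinarith
  set n₀ : ℕ := ⌊1 / δ⌋₊ with hn₀
  have hn₀1 : 1 ≤ n₀ := by
    rw [hn₀]
    exact Nat.le_floor (by rw [Nat.cast_one, le_div_iff₀ hδ, one_mul]; exact hδ1)
  have hn₀le : (n₀ : ℝ) * δ ≤ 1 := by
    have := Nat.floor_le (by positivity : (0:ℝ) ≤ 1 / δ)
    rw [← hn₀] at this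
    calc (n₀ : ℝ) * δ ≤ (1 / δ) * δ := by nlinarith
      _ = 1 := by field_simp
  refine ⟨(Finset.Icc 1 n₀).image fun j : ℕ => ((j : ℝ) * δ)⁻¹, ?_, ?_, ?_⟩
  · intro l hl
    obtain ⟨j, hj, rfl⟩ := Finset.mem_image.1 hl
    obtain ⟨hj1, hj2⟩ := Finset.mem_Icc.1 hj
    have hjpos : (0:ℝ) < (j:ℝ) * δ := by
      have : (1:ℝ) ≤ (j:ℝ) := by exact_mod_cast hj1
      nlinarith
    have hjle : (j:ℝ) * δ ≤ 1 := by
      have : (j:ℝ) ≤ (n₀:ℝ) := by exact_mod_cast hj2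
      nlinarith
    rw [one_le_inv_iff₀]
    exact ⟨hjpos, hjle⟩
  · calc ((Finset.image (fun j : ℕ => ((j : ℝ) * δ)⁻¹) (Finset.Icc 1 n₀)).card : ℝ)
        ≤ ((Finset.Icc 1 n₀).card : ℝ) := by exact_mod_cast Finset.card_image_le
      _ = (n₀ : ℝ) := by rw [Nat.card_Icc]; simp
      _ ≤ 1 / δ := Nat.floor_le (by positivity)
      _ = 2 * C / ε := by rw [hδdef]; field_simp
  · intro l hl
    have hl0 : (0:ℝ) < l := lt_of_lt_of_le one_pos hl
    set u : ℝ := l⁻¹ with hu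
    have hu0 : 0 < u := by positivity
    have hu1 : u ≤ 1 := by
      rw [hu]; exact inv_le_one_of_one_le₀ hl
    set k : ℕ := ⌈u / δ⌉₊ with hk
    set j : ℕ := min n₀ k with hj
    have hk1 : 1 ≤ k := Nat.one_le_iff_ne_zero.2 (by
      rw [hk]; exact (Nat.ceil_pos.2 (by positivity)).ne')
    have hj1 : 1 ≤ j := le_min hn₀1 hk1
    have hjn : j ≤ n₀ := min_le_left _ _
    have hjd : |u - (j : ℝ) * δ| ≤ δ := by
      rcases le_or_gt k n₀ with hcase | hcase
      · have hjk : j = k := min_eq_right hcase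
        have h5 : u ≤ (k:ℝ) * δ := by
          have := Nat.le_ceil (u / δ)
          rw [← hk] at this
          calc u = (u / δ) * δ := by field_simp
            _ ≤ (k:ℝ) * δ := by nlinarith
        have h6 : (k:ℝ) * δ < u + δ := by
          have := Nat.ceil_lt_add_one (by positivity : (0:ℝ) ≤ u / δ)
          rw [← hk] at this
          calc (k:ℝ) * δ < (u / δ + 1) * δ := by nlinarith
            _ = u + δ := by field_simp
        rw [hjk, abs_le]
        constructor <;> nlinarith
      · have hjk : j = n₀ := min_eq_left hcase.le
        have h5 : (n₀:ℝ) * δ < u := by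
          have h := (Nat.lt_ceil).1 (by rw [← hk]; exact hcase)
          exact (lt_div_iff₀ hδ).1 h
        have h6 : 1 < ((n₀:ℝ) + 1) * δ := by
          have := Nat.lt_floor_add_one (1 / δ)
          rw [← hn₀] at this
          calc (1:ℝ) = (1 / δ) * δ := by field_simp
            _ < ((n₀:ℝ) + 1) * δ := by nlinarith
        rw [hjk, abs_le]
        constructor <;> nlinarith
    refine ⟨((j : ℝ) * δ)⁻¹, Finset.mem_image.2 ⟨j, Finset.mem_Icc.2 ⟨hj1, hjn⟩, rfl⟩, ?_⟩
    have hjpos : (0:ℝ) < (j:ℝ) * δ := by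
      have : (1:ℝ) ≤ (j:ℝ) := by exact_mod_cast hj1
      nlinarith
    have hjle : (j:ℝ) * δ ≤ 1 := by
      have : (j:ℝ) ≤ (n₀:ℝ) := by exact_mod_cast hjn
      nlinarith
    have hl' : (1:ℝ) ≤ ((j : ℝ) * δ)⁻¹ := by
      rw [one_le_inv_iff₀]; exact ⟨hjpos, hjle⟩
    calc ∫ x : EuclideanSpace ℝ (Fin d),
            |K (l ^ ((1 : ℝ) / d) • x) - K ((((j : ℝ) * δ)⁻¹) ^ ((1 : ℝ) / d) • x)|
        ≤ |l⁻¹ - (((j : ℝ) * δ)⁻¹)⁻¹| * C := key2 l _ hl hl'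
      _ = |u - (j : ℝ) * δ| * C := by rw [inv_inv, ← hu]
      _ ≤ δ * C := mul_le_mul_of_nonneg_right hjd hC0.le
      _ = ε / 2 := hδC
      _ < ε := by linarith
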